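/- For every ω > 0: Ψ(0, ω) = π·ω and lim_{δ→∞} Ψ(δ, ω) = π·√(ω/2), where Ψ(δ, ω) := 2√(2ω) · ∫₀^{π/2} √((ω + δ²sin²θ)/(2 + δ² + δ²sin²θ)) dθ. -/

import Mathlib

open Real Filter MeasureTheory intervalIntegral

lemma key_deriv (θ : ℝ) (hθ : θ ∈ Set.uIcc (0:ℝ) (Real.pi/2)) :
    HasDerivAt (fun t => -Real.arcsin (Real.cos t / Real.sqrt 2))
      (Real.sqrt ((Real.sin θ)^2 / (1 + (Real.sin θ)^2))) θ := by
  have h2 : (0:ℝ) < Real.sqrt 2 := Real.sqrt_pos.mpr (by norm_num)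
  have h2sq : Real.sqrt 2 ^ 2 = 2 := Real.sq_sqrt (by norm_num)
  rw [Set.uIcc_of_le (by positivity)] at hθ
  have hs : 0 ≤ Real.sin θ :=
    Real.sin_nonneg_of_nonneg_of_le_pi hθ.1 (hθ.2.trans (by linarith [Real.pi_pos]))
  have hc : |Real.cos θ| ≤ 1 := Real.abs_cos_le_one θ
  have hx : |Real.cos θ / Real.sqrt 2| < 1 := by
    rw [abs_div, abs_of_pos h2, div_lt_one h2]
    have : (1:ℝ) < Real.sqrt 2 := by nlinarith
    linarith
  have hxlt := abs_lt.1 hx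
  have h1 : HasDerivAt (fun t => Real.cos t / Real.sqrt 2) (-Real.sin θ / Real.sqrt 2) θ :=
    (Real.hasDerivAt_cos θ).div_const _
  have h2' : HasDerivAt Real.arcsin (1 / Real.sqrt (1 - (Real.cos θ / Real.sqrt 2)^2))
      (Real.cos θ / Real.sqrt 2) :=
    Real.hasDerivAt_arcsin hxlt.1.ne' hxlt.2.ne
  have h3 := (h2'.comp θ h1).neg
  have h3' : HasDerivAt (fun t => -Real.arcsin (Real.cos t / Real.sqrt 2))
      (-(1 / Real.sqrt (1 - (Real.cos θ / Real.sqrt 2)^2) * (-Real.sin θ / Real.sqrt 2))) θ := h3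
  convert h3' using 1
  have e1 : 1 - (Real.cos θ / Real.sqrt 2)^2 = (1 + (Real.sin θ)^2)/2 := by
    rw [div_pow, h2sq]
    nlinarith [Real.sin_sq_add_cos_sq θ]
  have hs1 : (0:ℝ) < Real.sqrt (1 + (Real.sin θ)^2) :=
    Real.sqrt_pos.mpr (by positivity)
  rw [Real.sqrt_div (by positivity), Real.sqrt_sq hs, e1,
    Real.sqrt_div (by positivity)]
  rw [show Real.sqrt 2 = Real.sqrt 2 from rfl]
  field_simp

lemma key_integral : (∫ θ in (0:ℝ)..(Real.pi/2),
    Real.sqrt ((Real.sin θ)^2 / (1 + (Real.sin θ)^2))) = Real.pi/4 := by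
  have hcont : Continuous (fun θ : ℝ => Real.sqrt ((Real.sin θ)^2 / (1 + (Real.sin θ)^2))) := by
    apply Real.continuous_sqrt.comp
    exact (Real.continuous_sin.pow 2).div (by continuity) (fun x => by positivity)
  rw [intervalIntegral.integral_eq_sub_of_hasDerivAt (fun θ hθ => key_deriv θ hθ)
    (hcont.intervalIntegrable _ _)]
  have harc : Real.arcsin (Real.sqrt 2)⁻¹ = Real.pi/4 := by
    have h2 : (0:ℝ) < Real.sqrt 2 := Real.sqrt_pos.mpr (by norm_num)
    have : (Real.sqrt 2)⁻¹ = Real.sin (Real.pi/4) := by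
      rw [Real.sin_pi_div_four, inv_eq_iff_eq_inv, inv_div, eq_div_iff h2.ne']
      nlinarith [Real.sq_sqrt (show (0:ℝ) ≤ 2 by norm_num)]
    rw [this, Real.arcsin_sin (by linarith [Real.pi_pos]) (by linarith [Real.pi_pos])]
  simp [Real.cos_pi_div_two, Real.cos_zero, harc]

theorem Psi_values_and_limit (ω : ℝ) (hω : 0 < ω) :
    (2 * Real.sqrt (2 * ω) *
      ∫ θ in (0:ℝ)..(Real.pi/2),
        Real.sqrt ((ω + (0:ℝ)^2 * (Real.sin θ)^2) / (2 + (0:ℝ)^2 + (0:ℝ)^2 * (Real.sin θ)^2))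
      = Real.pi * ω) ∧
    Filter.Tendsto
      (fun δ : ℝ => 2 * Real.sqrt (2 * ω) *
        ∫ θ in (0:ℝ)..(Real.pi/2),
          Real.sqrt ((ω + δ^2 * (Real.sin θ)^2) / (2 + δ^2 + δ^2 * (Real.sin θ)^2)))
      Filter.atTop (nhds (Real.pi * Real.sqrt (ω / 2))) := by
  constructor
  · have hc : ∀ θ ∈ Set.uIcc (0:ℝ) (Real.pi/2),
        Real.sqrt ((ω + (0:ℝ)^2 * (Real.sin θ)^2) / (2 + (0:ℝ)^2 + (0:ℝ)^2 * (Real.sin θ)^2))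
          = Real.sqrt (ω/2) := by
      intro θ _; norm_num
    rw [intervalIntegral.integral_congr hc, intervalIntegral.integral_const, smul_eq_mul]
    have h1 : Real.sqrt (2*ω) * Real.sqrt (ω/2) = ω := by
      rw [← Real.sqrt_mul (by positivity), show 2*ω*(ω/2) = ω^2 by ring,
        Real.sqrt_sq hω.le]
    linear_combination Real.pi * h1
  · have key : Filter.Tendsto (fun δ : ℝ => ∫ θ in (0:ℝ)..(Real.pi/2),
        Real.sqrt ((ω + δ^2 * (Real.sin θ)^2) / (2 + δ^2 + δ^2 * (Real.sin θ)^2)))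
        Filter.atTop (nhds (Real.pi/4)) := by
      have hDCT := intervalIntegral.tendsto_integral_filter_of_dominated_convergence
        (μ := volume) (a := (0:ℝ)) (b := Real.pi/2)
        (F := fun δ θ => Real.sqrt ((ω + δ^2 * (Real.sin θ)^2) / (2 + δ^2 + δ^2 * (Real.sin θ)^2)))
        (f := fun θ => Real.sqrt ((Real.sin θ)^2 / (1 + (Real.sin θ)^2)))
        (bound := fun _ => Real.sqrt (ω + 1))
        (Filter.Eventually.of_forall (fun δ => by
          apply Continuous.aestronglyMeasurable
          apply Real.continuous_sqrt.comp
          apply Continuous.div (by continuity) (by continuity)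
          intro θ
          positivity))
        (Filter.Eventually.of_forall (fun δ => Filter.Eventually.of_forall (fun θ _ => by
          rw [Real.norm_eq_abs, abs_of_nonneg (Real.sqrt_nonneg _)]
          apply Real.sqrt_le_sqrt
          rw [div_le_iff₀ (by positivity)]
          nlinarith [sq_nonneg δ, sq_nonneg (Real.sin θ), hω, mul_nonneg hω.le (sq_nonneg δ), mul_nonneg (sq_nonneg δ) (sq_nonneg (Real.sin θ))])))
        (intervalIntegrable_const)
        (Filter.Eventually.of_forall (fun θ hθ => by
          rw [Set.uIoc_of_le (by positivity)] at hθ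
          have hsp : 0 < Real.sin θ :=
            Real.sin_pos_of_pos_of_lt_pi hθ.1 (lt_of_le_of_lt hθ.2 (by linarith [Real.pi_pos]))
          have hinner : Filter.Tendsto
              (fun δ : ℝ => (ω + δ^2 * (Real.sin θ)^2) / (2 + δ^2 + δ^2 * (Real.sin θ)^2))
              Filter.atTop (nhds ((Real.sin θ)^2 / (1 + (Real.sin θ)^2))) := by
            have hpow : Filter.Tendsto (fun δ:ℝ => δ^2) Filter.atTop Filter.atTop :=
              tendsto_pow_atTop two_ne_zero
            have hnum : Filter.Tendsto (fun δ:ℝ => ω/δ^2 + (Real.sin θ)^2) Filter.atTop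
                (nhds ((Real.sin θ)^2)) := by
              have := Filter.Tendsto.div_atTop (tendsto_const_nhds (x := ω)) hpow
              simpa using this.add (tendsto_const_nhds (x := (Real.sin θ)^2))
            have hden : Filter.Tendsto (fun δ:ℝ => 2/δ^2 + 1 + (Real.sin θ)^2) Filter.atTop
                (nhds (1 + (Real.sin θ)^2)) := by
              have := Filter.Tendsto.div_atTop (tendsto_const_nhds (x := (2:ℝ))) hpow
              have h := (this.add (tendsto_const_nhds (x := (1:ℝ)))).add
                (tendsto_const_nhds (x := (Real.sin θ)^2))
              simpa using h
            have hdiv := hnum.div hden (by positivity)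
            apply hdiv.congr'
            filter_upwards [Filter.eventually_ge_atTop (1:ℝ)] with δ hδ
            have hδ2 : (0:ℝ) < δ^2 := by positivity
            rw [Pi.div_apply]
            field_simp
          exact ((Real.continuous_sqrt.tendsto _).comp hinner)))
      rw [key_integral] at hDCT
      exact hDCT
    have hval : Real.pi * Real.sqrt (ω/2) = 2 * Real.sqrt (2*ω) * (Real.pi/4) := by
      have : Real.sqrt (2*ω) = 2 * Real.sqrt (ω/2) := by
        rw [show (2:ℝ)*ω = 2^2 * (ω/2) by ring, Real.sqrt_mul (by positivity),
          Real.sqrt_sq (by norm_num)]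
      rw [this]; ring
    rw [hval]
    exact key.const_mul _
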